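/- Null attractors of a graph-directed self-similar iterated function system with uniformly separated translation parts force a small graph: let Γ_{kℓ} (1 ≤ k, ℓ ≤ M) be finite edge sets, each edge e carrying a vector d_e ∈ ℝ^d, let λ > 1, O a linear isometry of ℝ^d, Q = λO, and f_e(x) = Q^{−1}(x + d_e). Let E₁,…,E_M be nonempty compact subsets of ℝ^d with E_k = ⋃_{ℓ ≤ M} ⋃_{e ∈ Γ_{kℓ}} f_e(E_ℓ) for all k. For a path I = e₁⋯e_n from k to ℓ put d_I = Σ_{i=1}^n Q^{n−i} d_{e_i}, and assume there is r > 0 such that for all n ≥ 1 and all k, ℓ, the points d_I over paths I of length n from k to ℓ are pairwise distinct with mutual distance at least r. If every E_k has d-dimensional Lebesgue measure zero, then the spectral radius of the nonnegative M×M matrix (#Γ_{kℓ})_{k,ℓ} is strictly less than λ^d. -/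

import Mathlib

open Pointwise Set MeasureTheory

noncomputable section

namespace Stmt14

attribute [local instance] Classical.propDecidable

variable {d M : ℕ}

/-- the path translation sum `∑ Q^{n-1-i} (c i)`. -/
def pSum (n : ℕ) (Qc : EuclideanSpace ℝ (Fin d) →L[ℝ] EuclideanSpace ℝ (Fin d))
    (c : Fin n → EuclideanSpace ℝ (Fin d)) : EuclideanSpace ℝ (Fin d) :=
  ∑ i : Fin n, (Qc ^ (n - 1 - (i : ℕ))) (c i)

lemma pSum_zero (Qc : EuclideanSpace ℝ (Fin d) →L[ℝ] EuclideanSpace ℝ (Fin d))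
    (c : Fin 0 → EuclideanSpace ℝ (Fin d)) : pSum 0 Qc c = 0 := by
  simp [pSum]

lemma pSum_succ (n : ℕ) (Qc : EuclideanSpace ℝ (Fin d) →L[ℝ] EuclideanSpace ℝ (Fin d))
    (e : EuclideanSpace ℝ (Fin d)) (c : Fin n → EuclideanSpace ℝ (Fin d)) :
    pSum (n+1) Qc (Fin.cons e c) = (Qc ^ n) e + pSum n Qc c := by
  unfold pSum
  rw [Fin.sum_univ_succ, Fin.cons_zero]
  simp only [Fin.val_zero, Nat.sub_zero, Nat.add_sub_cancel, Fin.cons_succ, Fin.val_succ]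
  congr 1
  apply Finset.sum_congr rfl
  intro i _
  have h : n - (↑i + 1) = n - 1 - ↑i := by omega
  rw [h]

/-- sets of path sums of paths of length `n` from `k` to `l`. -/
def gset (Γ : Fin M → Fin M → Finset (EuclideanSpace ℝ (Fin d)))
    (Qc : EuclideanSpace ℝ (Fin d) →L[ℝ] EuclideanSpace ℝ (Fin d)) :
    ℕ → Fin M → Fin M → Finset (EuclideanSpace ℝ (Fin d))
  | 0, k, l => if k = l then {0} else ∅
  | (n+1), k, l => Finset.univ.biUnion fun m => (Γ k m).biUnion fun e =>
      (gset Γ Qc n m l).image fun x => (Qc ^ n) e + x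

lemma gset_realize {Γ : Fin M → Fin M → Finset (EuclideanSpace ℝ (Fin d))}
    {Qc : EuclideanSpace ℝ (Fin d) →L[ℝ] EuclideanSpace ℝ (Fin d)}
    {n : ℕ} {k l : Fin M} {x : EuclideanSpace ℝ (Fin d)} (hx : x ∈ gset Γ Qc n k l) :
    ∃ v : Fin (n+1) → Fin M, ∃ c : Fin n → EuclideanSpace ℝ (Fin d),
      v 0 = k ∧ v (Fin.last n) = l ∧ (∀ i : Fin n, c i ∈ Γ (v i.castSucc) (v i.succ)) ∧
      x = pSum n Qc c := by
  induction n generalizing k x with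
  | zero =>
    by_cases hkl : k = l
    · subst hkl
      simp only [gset] at hx
      rw [if_true, Finset.mem_singleton] at hx
      exact ⟨fun _ => k, Fin.elim0, rfl, rfl, fun i => i.elim0, by simp [pSum_zero, hx]⟩
    · simp [gset, hkl] at hx
  | succ n ih =>
    simp only [gset, Finset.mem_biUnion, Finset.mem_univ, Finset.mem_image, true_and] at hx
    obtain ⟨m, e, he, x', hx', rfl⟩ := hx
    obtain ⟨v, c, hv0, hvl, hc, rfl⟩ := ih hx'
    refine ⟨Fin.cons k v, Fin.cons e c, Fin.cons_zero _ _, ?_, ?_, ?_⟩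
    · rw [← Fin.succ_last, Fin.cons_succ]; exact hvl
    · intro i
      induction i using Fin.cases with
      | zero =>
        simpa [Fin.castSucc_zero, Fin.cons_zero, Fin.cons_succ, hv0] using he
      | succ j =>
        rw [← Fin.succ_castSucc, Fin.cons_succ, Fin.cons_succ, Fin.cons_succ]
        exact hc j
    · rw [pSum_succ]

def SepHyp (Γ : Fin M → Fin M → Finset (EuclideanSpace ℝ (Fin d)))
    (Q : EuclideanSpace ℝ (Fin d) ≃L[ℝ] EuclideanSpace ℝ (Fin d)) (r : ℝ) : Prop :=
  ∀ n : ℕ, 1 ≤ n → ∀ k l : Fin M,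
      ∀ v w : Fin (n + 1) → Fin M, ∀ c c' : Fin n → EuclideanSpace ℝ (Fin d),
        v 0 = k → v (Fin.last n) = l → w 0 = k → w (Fin.last n) = l →
        (∀ i : Fin n, c i ∈ Γ (v i.castSucc) (v i.succ)) →
        (∀ i : Fin n, c' i ∈ Γ (w i.castSucc) (w i.succ)) →
        (v, c) ≠ (w, c') →
        r ≤ ‖pSum n (Q : EuclideanSpace ℝ (Fin d) →L[ℝ] EuclideanSpace ℝ (Fin d)) c -
             pSum n (Q : EuclideanSpace ℝ (Fin d) →L[ℝ] EuclideanSpace ℝ (Fin d)) c'‖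

variable {Γ : Fin M → Fin M → Finset (EuclideanSpace ℝ (Fin d))}
  {Q : EuclideanSpace ℝ (Fin d) ≃L[ℝ] EuclideanSpace ℝ (Fin d)} {r : ℝ}

lemma cons_path_cond {n : ℕ} {k m : Fin M} {v : Fin (n+1) → Fin M}
    {c : Fin n → EuclideanSpace ℝ (Fin d)} {e : EuclideanSpace ℝ (Fin d)}
    (hv0 : v 0 = m) (hc : ∀ i : Fin n, c i ∈ Γ (v i.castSucc) (v i.succ)) (he : e ∈ Γ k m) :
    ∀ i : Fin (n+1), (Fin.cons e c : Fin (n+1) → EuclideanSpace ℝ (Fin d)) i ∈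
      Γ ((Fin.cons k v : Fin (n+2) → Fin M) i.castSucc)
        ((Fin.cons k v : Fin (n+2) → Fin M) i.succ) := by
  intro i
  induction i using Fin.cases with
  | zero => simpa [hv0] using he
  | succ j =>
    rw [← Fin.succ_castSucc, Fin.cons_succ, Fin.cons_succ, Fin.cons_succ]
    exact hc j

lemma cons_path_last {n : ℕ} {k l : Fin M} {v : Fin (n+1) → Fin M} (hvl : v (Fin.last n) = l) :
    (Fin.cons k v : Fin (n+2) → Fin M) (Fin.last (n+1)) = l := by
  rw [← Fin.succ_last, Fin.cons_succ]; exact hvl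

lemma gset_separated (hr : 0 < r) (hsep : SepHyp Γ Q r) {n : ℕ} (hn : 1 ≤ n) {k l : Fin M}
    {x x' : EuclideanSpace ℝ (Fin d)}
    (hx : x ∈ gset Γ (Q : EuclideanSpace ℝ (Fin d) →L[ℝ] EuclideanSpace ℝ (Fin d)) n k l)
    (hx' : x' ∈ gset Γ (Q : EuclideanSpace ℝ (Fin d) →L[ℝ] EuclideanSpace ℝ (Fin d)) n k l)
    (hne : x ≠ x') : r ≤ ‖x - x'‖ := by
  obtain ⟨v, c, h1, h2, h3, rfl⟩ := gset_realize hx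
  obtain ⟨w, c2, g1, g2, g3, rfl⟩ := gset_realize hx'
  exact hsep n hn k l v w c c2 h1 h2 g1 g2 h3 g3 (fun hEq => hne (by cases hEq; rfl))

lemma gset_collision (hr : 0 < r) (hsep : SepHyp Γ Q r) {n : ℕ} {k l m m' : Fin M}
    {e e' x x' : EuclideanSpace ℝ (Fin d)}
    (he : e ∈ Γ k m) (he' : e' ∈ Γ k m')
    (hx : x ∈ gset Γ (Q : EuclideanSpace ℝ (Fin d) →L[ℝ] EuclideanSpace ℝ (Fin d)) n m l)
    (hx' : x' ∈ gset Γ (Q : EuclideanSpace ℝ (Fin d) →L[ℝ] EuclideanSpace ℝ (Fin d)) n m' l)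
    (heq : ((Q : EuclideanSpace ℝ (Fin d) →L[ℝ] EuclideanSpace ℝ (Fin d)) ^ n) e + x =
           ((Q : EuclideanSpace ℝ (Fin d) →L[ℝ] EuclideanSpace ℝ (Fin d)) ^ n) e' + x') :
    m = m' ∧ e = e' ∧ x = x' := by
  obtain ⟨v, c, hv0, hvl, hc, rfl⟩ := gset_realize hx
  obtain ⟨w, c2, hw0, hwl, hc2, rfl⟩ := gset_realize hx'
  have hsum : pSum (n+1) (Q : EuclideanSpace ℝ (Fin d) →L[ℝ] EuclideanSpace ℝ (Fin d)) (Fin.cons e c)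
      = pSum (n+1) (Q : EuclideanSpace ℝ (Fin d) →L[ℝ] EuclideanSpace ℝ (Fin d)) (Fin.cons e' c2) := by
    rw [pSum_succ, pSum_succ]; exact heq
  have hpaths : ((Fin.cons k v : Fin (n+2) → Fin M), (Fin.cons e c : Fin (n+1) → EuclideanSpace ℝ (Fin d)))
      = ((Fin.cons k w : Fin (n+2) → Fin M), (Fin.cons e' c2 : Fin (n+1) → EuclideanSpace ℝ (Fin d))) := by
    by_contra hne
    have hb := hsep (n+1) (by omega) k l (Fin.cons k v) (Fin.cons k w) (Fin.cons e c) (Fin.cons e' c2)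
      (Fin.cons_zero _ _) (cons_path_last hvl) (Fin.cons_zero _ _) (cons_path_last hwl)
      (cons_path_cond hv0 hc he) (cons_path_cond hw0 hc2 he') hne
    rw [hsum, sub_self, norm_zero] at hb
    linarith
  have h1 : (Fin.cons k v : Fin (n+2) → Fin M) = Fin.cons k w := congrArg Prod.fst hpaths
  have h2 : (Fin.cons e c : Fin (n+1) → EuclideanSpace ℝ (Fin d)) = Fin.cons e' c2 :=
    congrArg Prod.snd hpaths
  have hvw : v = w := by
    funext j
    have := congrFun h1 j.succ
    rwa [Fin.cons_succ, Fin.cons_succ] at this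
  have hee : e = e' := by
    have := congrFun h2 0
    rwa [Fin.cons_zero, Fin.cons_zero] at this
  have hcc : c = c2 := by
    funext j
    have := congrFun h2 j.succ
    rwa [Fin.cons_succ, Fin.cons_succ] at this
  refine ⟨?_, hee, by rw [hcc]⟩
  rw [← hv0, ← hw0, hvw]

lemma gset_card (hr : 0 < r) (hsep : SepHyp Γ Q r) (n : ℕ) (k l : Fin M) :
    (gset Γ (Q : EuclideanSpace ℝ (Fin d) →L[ℝ] EuclideanSpace ℝ (Fin d)) (n+1) k l).card
      = ∑ m : Fin M, (Γ k m).card *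
        (gset Γ (Q : EuclideanSpace ℝ (Fin d) →L[ℝ] EuclideanSpace ℝ (Fin d)) n m l).card := by
  have hinj : ∀ a : EuclideanSpace ℝ (Fin d), Function.Injective (fun x => a + x) := by
    intro a u v h
    simpa using h
  simp only [gset]
  rw [Finset.card_biUnion]
  · apply Finset.sum_congr rfl
    intro m _
    rw [Finset.card_biUnion]
    · rw [Finset.sum_congr rfl (fun e _ => Finset.card_image_of_injective _ (hinj _))]
      simp [Finset.sum_const, mul_comm]
    · intro e he e' he' hne
      rw [Function.onFun, Finset.disjoint_left]
      intro z hz hz'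
      simp only [Finset.mem_image] at hz hz'
      obtain ⟨x, hx, hxe⟩ := hz
      obtain ⟨x', hx', hxe'⟩ := hz'
      exact hne (gset_collision hr hsep he he' hx hx' (hxe.trans hxe'.symm)).2.1
  · intro m _ m' _ hne
    rw [Function.onFun, Finset.disjoint_left]
    intro z hz hz'
    simp only [Finset.mem_biUnion, Finset.mem_image] at hz hz'
    obtain ⟨e, he, x, hx, hxe⟩ := hz
    obtain ⟨e', he', x', hx', hxe'⟩ := hz'
    exact hne (gset_collision hr hsep he he' hx hx' (hxe.trans hxe'.symm)).1

lemma Pn_Qn (Q : EuclideanSpace ℝ (Fin d) ≃L[ℝ] EuclideanSpace ℝ (Fin d)) (n : ℕ)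
    (z : EuclideanSpace ℝ (Fin d)) :
    (((Q.symm : EuclideanSpace ℝ (Fin d) →L[ℝ] EuclideanSpace ℝ (Fin d))) ^ n)
      ((((Q : EuclideanSpace ℝ (Fin d) →L[ℝ] EuclideanSpace ℝ (Fin d))) ^ n) z) = z := by
  induction n with
  | zero => simp
  | succ n ih =>
    rw [pow_succ (Q.symm : EuclideanSpace ℝ (Fin d) →L[ℝ] EuclideanSpace ℝ (Fin d)),
      pow_succ' (Q : EuclideanSpace ℝ (Fin d) →L[ℝ] EuclideanSpace ℝ (Fin d))]
    simp only [ContinuousLinearMap.mul_apply]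
    have h : (Q.symm : EuclideanSpace ℝ (Fin d) →L[ℝ] EuclideanSpace ℝ (Fin d))
        ((Q : EuclideanSpace ℝ (Fin d) →L[ℝ] EuclideanSpace ℝ (Fin d))
          ((((Q : EuclideanSpace ℝ (Fin d) →L[ℝ] EuclideanSpace ℝ (Fin d))) ^ n) z))
        = (((Q : EuclideanSpace ℝ (Fin d) →L[ℝ] EuclideanSpace ℝ (Fin d))) ^ n) z := by
      simp
    rw [h, ih]

lemma norm_Pc_pow {lam : ℝ} (Q : EuclideanSpace ℝ (Fin d) ≃L[ℝ] EuclideanSpace ℝ (Fin d))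
    (hQ : ∀ x, ‖Q x‖ = lam * ‖x‖) (n : ℕ) (z : EuclideanSpace ℝ (Fin d)) :
    lam ^ n * ‖(((Q.symm : EuclideanSpace ℝ (Fin d) →L[ℝ] EuclideanSpace ℝ (Fin d))) ^ n) z‖
      = ‖z‖ := by
  have h1 : ∀ w : EuclideanSpace ℝ (Fin d),
      lam * ‖(Q.symm : EuclideanSpace ℝ (Fin d) →L[ℝ] EuclideanSpace ℝ (Fin d)) w‖ = ‖w‖ := by
    intro w
    have := hQ (Q.symm w)
    simp only [ContinuousLinearEquiv.apply_symm_apply] at this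
    rw [ContinuousLinearEquiv.coe_coe, ← this]
  induction n generalizing z with
  | zero => simp
  | succ n ih =>
    rw [pow_succ (Q.symm : EuclideanSpace ℝ (Fin d) →L[ℝ] EuclideanSpace ℝ (Fin d)),
      ContinuousLinearMap.mul_apply, pow_succ lam]
    calc lam ^ n * lam *
        ‖(((Q.symm : EuclideanSpace ℝ (Fin d) →L[ℝ] EuclideanSpace ℝ (Fin d))) ^ n)
          ((Q.symm : EuclideanSpace ℝ (Fin d) →L[ℝ] EuclideanSpace ℝ (Fin d)) z)‖
        = lam * (lam ^ n *
          ‖(((Q.symm : EuclideanSpace ℝ (Fin d) →L[ℝ] EuclideanSpace ℝ (Fin d))) ^ n)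
            ((Q.symm : EuclideanSpace ℝ (Fin d) →L[ℝ] EuclideanSpace ℝ (Fin d)) z)‖) := by ring
      _ = lam * ‖(Q.symm : EuclideanSpace ℝ (Fin d) →L[ℝ] EuclideanSpace ℝ (Fin d)) z‖ := by
          rw [ih]
      _ = ‖z‖ := h1 z

lemma gset_mem_attr {Ek : Fin M → Set (EuclideanSpace ℝ (Fin d))}
    (hattr : ∀ k, Ek k = ⋃ l, ⋃ e ∈ Γ k l, (fun x => Q.symm (x + e)) '' Ek l)
    {n : ℕ} {k l : Fin M} {x : EuclideanSpace ℝ (Fin d)}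
    (hx : x ∈ gset Γ (Q : EuclideanSpace ℝ (Fin d) →L[ℝ] EuclideanSpace ℝ (Fin d)) n k l)
    {y : EuclideanSpace ℝ (Fin d)} (hy : y ∈ Ek l) :
    (((Q.symm : EuclideanSpace ℝ (Fin d) →L[ℝ] EuclideanSpace ℝ (Fin d))) ^ n) (y + x) ∈ Ek k := by
  induction n generalizing k x with
  | zero =>
    by_cases hkl : k = l
    · subst hkl
      have hx0 : x = 0 := by simpa [gset] using hx
      subst hx0
      simpa using hy
    · simp [gset, hkl] at hx
  | succ n ih =>
    simp only [gset, Finset.mem_biUnion, Finset.mem_univ, Finset.mem_image, true_and] at hx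
    obtain ⟨m, e, he, x', hx', rfl⟩ := hx
    have hz := ih hx'
    have inner : (((Q.symm : EuclideanSpace ℝ (Fin d) →L[ℝ] EuclideanSpace ℝ (Fin d))) ^ n)
        (y + ((((Q : EuclideanSpace ℝ (Fin d) →L[ℝ] EuclideanSpace ℝ (Fin d))) ^ n) e + x'))
        = (((Q.symm : EuclideanSpace ℝ (Fin d) →L[ℝ] EuclideanSpace ℝ (Fin d))) ^ n) (y + x')
          + e := by
      have hre : y + ((((Q : EuclideanSpace ℝ (Fin d) →L[ℝ] EuclideanSpace ℝ (Fin d))) ^ n) e + x')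
          = (y + x') + (((Q : EuclideanSpace ℝ (Fin d) →L[ℝ] EuclideanSpace ℝ (Fin d))) ^ n) e := by
        abel
      rw [hre, map_add, Pn_Qn]
    have key : (((Q.symm : EuclideanSpace ℝ (Fin d) →L[ℝ] EuclideanSpace ℝ (Fin d))) ^ (n+1))
        (y + ((((Q : EuclideanSpace ℝ (Fin d) →L[ℝ] EuclideanSpace ℝ (Fin d))) ^ n) e + x'))
        = Q.symm ((((Q.symm : EuclideanSpace ℝ (Fin d) →L[ℝ] EuclideanSpace ℝ (Fin d))) ^ n)
            (y + x') + e) := by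
      rw [pow_succ' (Q.symm : EuclideanSpace ℝ (Fin d) →L[ℝ] EuclideanSpace ℝ (Fin d)),
        ContinuousLinearMap.mul_apply, inner]
      rfl
    rw [key, hattr k]
    refine mem_iUnion.mpr ⟨m, ?_⟩
    refine mem_iUnion₂.mpr ⟨e, he, ⟨_, hz, rfl⟩⟩

end Stmt14

/-- for a graph-directed self-similar IFS `f_e(x) = Q⁻¹(x + d_e)`,
`Q = λ·O` with `O` a linear isometry (equivalently `‖Qx‖ = λ‖x‖`), whose path
translation parts `d_I` are uniformly separated, if all attractor pieces `E_k` are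
Lebesgue-null then the spectral radius of the edge-count matrix `(#Γ_{kℓ})` is `< λ^d`. -/
theorem stmt_14 (d M : ℕ) (hd : 1 ≤ d) (hM : 1 ≤ M)
    (lam : ℝ) (hlam : 1 < lam)
    (Q : EuclideanSpace ℝ (Fin d) ≃L[ℝ] EuclideanSpace ℝ (Fin d))
    (hQ : ∀ x, ‖Q x‖ = lam * ‖x‖)
    (Γ : Fin M → Fin M → Finset (EuclideanSpace ℝ (Fin d)))
    (Ek : Fin M → Set (EuclideanSpace ℝ (Fin d)))
    (hne : ∀ k, (Ek k).Nonempty) (hcp : ∀ k, IsCompact (Ek k))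
    (hattr : ∀ k, Ek k = ⋃ l, ⋃ e ∈ Γ k l, (fun x => Q.symm (x + e)) '' Ek l)
    (r : ℝ) (hr : 0 < r)
    (hsep : ∀ n : ℕ, 1 ≤ n → ∀ k l : Fin M,
      ∀ v w : Fin (n + 1) → Fin M, ∀ c c' : Fin n → EuclideanSpace ℝ (Fin d),
        v 0 = k → v (Fin.last n) = l → w 0 = k → w (Fin.last n) = l →
        (∀ i : Fin n, c i ∈ Γ (v i.castSucc) (v i.succ)) →
        (∀ i : Fin n, c' i ∈ Γ (w i.castSucc) (w i.succ)) →
        (v, c) ≠ (w, c') →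
        r ≤ ‖(∑ i : Fin n,
              ((Q : EuclideanSpace ℝ (Fin d) →L[ℝ] EuclideanSpace ℝ (Fin d)) ^ (n - 1 - (i : ℕ)))
                (c i)) -
            ∑ i : Fin n,
              ((Q : EuclideanSpace ℝ (Fin d) →L[ℝ] EuclideanSpace ℝ (Fin d)) ^ (n - 1 - (i : ℕ)))
                (c' i)‖)
    (hnull : ∀ k, volume (Ek k) = 0) :
    ∀ μ ∈ spectrum ℂ (Matrix.of fun k l : Fin M => ((Γ k l).card : ℂ)),
      ‖μ‖ < lam ^ d := by
  classical
  intro μ hμ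
  by_contra hcon
  push_neg at hcon
  have hlam0 : (0:ℝ) < lam := lt_trans one_pos hlam
  have hsep' : Stmt14.SepHyp Γ Q r := hsep
  -- eigenvector
  have hdet : (Matrix.det ((algebraMap ℂ (Matrix (Fin M) (Fin M) ℂ)) μ
      - Matrix.of fun k l => ((Γ k l).card : ℂ))) = 0 := by
    rw [spectrum.mem_iff] at hμ
    by_contra hdne
    exact hμ ((Matrix.isUnit_iff_isUnit_det _).mpr (isUnit_iff_ne_zero.mpr hdne))
  obtain ⟨x, hx0, hxe⟩ := (Matrix.exists_mulVec_eq_zero_iff).mpr hdet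
  have hmul : (Matrix.of fun k l => ((Γ k l).card : ℂ)).mulVec x = μ • x := by
    rw [Matrix.sub_mulVec, Algebra.algebraMap_eq_smul_one, Matrix.smul_mulVec,
      Matrix.one_mulVec, sub_eq_zero] at hxe
    exact hxe.symm
  set y : Fin M → ℝ := fun k => ‖x k‖ with hy
  have hynn : ∀ k, 0 ≤ y k := fun k => norm_nonneg _
  have heig : ∀ k, ‖μ‖ * y k ≤ ∑ l, ((Γ k l).card : ℝ) * y l := by
    intro k
    have h1 : μ * x k = ∑ l, ((Γ k l).card : ℂ) * x l := by
      have h2 := congrFun hmul k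
      simp only [Matrix.mulVec, dotProduct, Matrix.of_apply, Pi.smul_apply,
        smul_eq_mul] at h2
      exact h2.symm
    calc ‖μ‖ * y k = ‖μ * x k‖ := (norm_mul _ _).symm
      _ = ‖∑ l, ((Γ k l).card : ℂ) * x l‖ := by rw [h1]
      _ ≤ ∑ l, ‖((Γ k l).card : ℂ) * x l‖ := norm_sum_le _ _
      _ = ∑ l, ((Γ k l).card : ℝ) * y l := by
          apply Finset.sum_congr rfl
          intro l _
          rw [norm_mul, Complex.norm_natCast]
  have key : ∀ n : ℕ, ∀ k, ‖μ‖ ^ n * y k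
      ≤ ∑ l, ((Stmt14.gset Γ (Q : EuclideanSpace ℝ (Fin d) →L[ℝ] EuclideanSpace ℝ (Fin d))
          n k l).card : ℝ) * y l := by
    intro n
    induction n with
    | zero =>
      intro k
      simp only [pow_zero, one_mul]
      have hz : ∀ l, ((Stmt14.gset Γ
          (Q : EuclideanSpace ℝ (Fin d) →L[ℝ] EuclideanSpace ℝ (Fin d)) 0 k l).card : ℝ)
          = if k = l then 1 else 0 := by
        intro l
        by_cases h : k = l <;> simp [Stmt14.gset, h]
      rw [Finset.sum_congr rfl (fun l _ => by rw [hz l])]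
      simp
    | succ n ih =>
      intro k
      have habs : (0:ℝ) ≤ ‖μ‖ ^ n := pow_nonneg (norm_nonneg _) n
      calc ‖μ‖ ^ (n+1) * y k
          = ‖μ‖ ^ n * (‖μ‖ * y k) := by ring
        _ ≤ ‖μ‖ ^ n * (∑ m, ((Γ k m).card : ℝ) * y m) :=
            mul_le_mul_of_nonneg_left (heig k) habs
        _ = ∑ m, ((Γ k m).card : ℝ) * (‖μ‖ ^ n * y m) := by
            rw [Finset.mul_sum]
            apply Finset.sum_congr rfl
            intro m _
            ring
        _ ≤ ∑ m, ((Γ k m).card : ℝ) * (∑ l, ((Stmt14.gset Γ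
              (Q : EuclideanSpace ℝ (Fin d) →L[ℝ] EuclideanSpace ℝ (Fin d)) n m l).card : ℝ)
                * y l) := by
            apply Finset.sum_le_sum
            intro m _
            exact mul_le_mul_of_nonneg_left (ih m) (Nat.cast_nonneg _)
        _ = ∑ l, ((Stmt14.gset Γ
              (Q : EuclideanSpace ℝ (Fin d) →L[ℝ] EuclideanSpace ℝ (Fin d)) (n+1) k l).card : ℝ)
                * y l := by
            simp only [Finset.mul_sum]
            rw [Finset.sum_comm]
            apply Finset.sum_congr rfl
            intro l _
            rw [Stmt14.gset_card hr hsep' n k l]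
            push_cast
            rw [Finset.sum_mul]
            apply Finset.sum_congr rfl
            intro m _
            ring
  -- maximizing index
  haveI : Nonempty (Fin M) := ⟨⟨0, hM⟩⟩
  obtain ⟨k0, -, hk0⟩ := Finset.exists_max_image Finset.univ y Finset.univ_nonempty
  have hk0' : ∀ k, y k ≤ y k0 := fun k => hk0 k (Finset.mem_univ k)
  have hy0pos : 0 < y k0 := by
    obtain ⟨k1, hk1⟩ := Function.ne_iff.mp hx0
    exact lt_of_lt_of_le (norm_pos_iff.mpr hk1) (hk0' k1)
  have hcount : ∀ n : ℕ, ‖μ‖ ^ n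
      ≤ ∑ l, ((Stmt14.gset Γ (Q : EuclideanSpace ℝ (Fin d) →L[ℝ] EuclideanSpace ℝ (Fin d))
          n k0 l).card : ℝ) := by
    intro n
    have h1 := key n k0
    have h2 : ∑ l, ((Stmt14.gset Γ
        (Q : EuclideanSpace ℝ (Fin d) →L[ℝ] EuclideanSpace ℝ (Fin d)) n k0 l).card : ℝ) * y l
        ≤ (∑ l, ((Stmt14.gset Γ
          (Q : EuclideanSpace ℝ (Fin d) →L[ℝ] EuclideanSpace ℝ (Fin d)) n k0 l).card : ℝ))
            * y k0 := by
      rw [Finset.sum_mul]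
      exact Finset.sum_le_sum fun l _ => mul_le_mul_of_nonneg_left (hk0' l) (Nat.cast_nonneg _)
    have h3 := le_trans h1 h2
    exact le_of_mul_le_mul_right h3 hy0pos
  -- geometric / measure-theoretic part
  haveI : Nonempty (Fin d) := ⟨⟨0, hd⟩⟩
  set E0 : Set (EuclideanSpace ℝ (Fin d)) := Ek k0 with hE0
  have hE0closed : IsClosed E0 := (hcp k0).isClosed
  set vB := volume (Metric.ball (0 : EuclideanSpace ℝ (Fin d)) 1) with hvB
  have hvB0 : 0 < vB := Metric.measure_ball_pos volume _ one_pos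
  have hc0 : (0:ℝ) < (r/2)^d / M := by positivity
  have hest : ∀ n : ℕ, 1 ≤ n →
      ENNReal.ofReal ((r/2)^d / M) * vB ≤ volume (Metric.thickening (r/2 * (lam^n)⁻¹) E0) := by
    intro n hn
    have hmu : (lam ^ d) ^ n ≤ ‖μ‖ ^ n :=
      pow_le_pow_left₀ (by positivity) hcon n
    have hex : ∃ l : Fin M, (lam ^ d) ^ n / M ≤ ((Stmt14.gset Γ
        (Q : EuclideanSpace ℝ (Fin d) →L[ℝ] EuclideanSpace ℝ (Fin d)) n k0 l).card : ℝ) := by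
      have hsum2 : ∑ _l : Fin M, (lam ^ d) ^ n / (M:ℝ)
          ≤ ∑ l, ((Stmt14.gset Γ
            (Q : EuclideanSpace ℝ (Fin d) →L[ℝ] EuclideanSpace ℝ (Fin d)) n k0 l).card : ℝ) := by
        rw [Finset.sum_const, Finset.card_univ, Fintype.card_fin, nsmul_eq_mul,
          mul_div_cancel₀ _ (by positivity : ((M:ℝ) ≠ 0))]
        exact le_trans hmu (hcount n)
      obtain ⟨l, -, hl⟩ := Finset.exists_le_of_sum_le Finset.univ_nonempty hsum2
      exact ⟨l, hl⟩
    obtain ⟨l1, hl1⟩ := hex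
    obtain ⟨y0, hy0mem⟩ := hne l1
    set δ : ℝ := r/2 * (lam^n)⁻¹ with hδdef
    have hδ : 0 < δ := by positivity
    set G := Stmt14.gset Γ (Q : EuclideanSpace ℝ (Fin d) →L[ℝ] EuclideanSpace ℝ (Fin d)) n k0 l1
      with hGdef
    set f : EuclideanSpace ℝ (Fin d) → EuclideanSpace ℝ (Fin d) :=
      fun s => (((Q.symm : EuclideanSpace ℝ (Fin d) →L[ℝ] EuclideanSpace ℝ (Fin d))) ^ n)
        (y0 + s) with hfdef
    have hdist : ∀ s ∈ G, ∀ s' ∈ G, s ≠ s' → r * (lam^n)⁻¹ ≤ dist (f s) (f s') := by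
      intro s hs s' hs' hss
      have h1 : lam ^ n * ‖(((Q.symm : EuclideanSpace ℝ (Fin d) →L[ℝ]
          EuclideanSpace ℝ (Fin d))) ^ n) (s - s')‖ = ‖s - s'‖ := by
        have h0 := Stmt14.norm_Pc_pow Q hQ n ((y0 + s) - (y0 + s'))
        rwa [show (y0 + s) - (y0 + s') = s - s' by abel] at h0
      have h3 : r ≤ ‖s - s'‖ := Stmt14.gset_separated hr hsep' hn hs hs' hss
      have h4 : ‖(((Q.symm : EuclideanSpace ℝ (Fin d) →L[ℝ] EuclideanSpace ℝ (Fin d))) ^ n)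
          (s - s')‖ = ‖s - s'‖ * (lam ^ n)⁻¹ := by
        rw [← h1]
        field_simp
      rw [hfdef, dist_eq_norm, ← map_sub, show (y0 + s) - (y0 + s') = s - s' by abel, h4]
      exact mul_le_mul_of_nonneg_right h3 (by positivity)
    have hinj : Set.InjOn f (↑G : Set (EuclideanSpace ℝ (Fin d))) := by
      intro s hs s' hs' hEq
      by_contra hss
      have hd2 := hdist s (Finset.mem_coe.mp hs) s' (Finset.mem_coe.mp hs') hss
      rw [hEq, dist_self] at hd2
      have : (0:ℝ) < r * (lam^n)⁻¹ := by positivity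
      linarith
    set pts := G.image f with hptsdef
    have hptscard : pts.card = G.card := Finset.card_image_of_injOn hinj
    have hptsE : ∀ p ∈ pts, p ∈ E0 := by
      intro p hp
      obtain ⟨s, hs, rfl⟩ := Finset.mem_image.mp hp
      exact Stmt14.gset_mem_attr hattr hs hy0mem
    have hdisj : (↑pts : Set (EuclideanSpace ℝ (Fin d))).PairwiseDisjoint
        (fun p => Metric.ball p δ) := by
      intro p hp q hq hpq
      obtain ⟨s, hs, rfl⟩ := Finset.mem_image.mp (Finset.mem_coe.mp hp)
      obtain ⟨s', hs', rfl⟩ := Finset.mem_image.mp (Finset.mem_coe.mp hq)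
      have hss : s ≠ s' := fun h => hpq (by rw [h])
      apply Metric.ball_disjoint_ball
      calc δ + δ = r * (lam^n)⁻¹ := by rw [hδdef]; ring
        _ ≤ dist (f s) (f s') := hdist s hs s' hs' hss
    have hmeas := measure_biUnion_finset (μ := volume) hdisj (fun p _ => measurableSet_ball)
    have hsubset : (⋃ p ∈ pts, Metric.ball p δ) ⊆ Metric.thickening δ E0 := by
      intro z hz
      simp only [mem_iUnion, exists_prop] at hz
      obtain ⟨p, hp, hzp⟩ := hz
      rw [Metric.mem_thickening_iff]
      exact ⟨p, hptsE p hp, Metric.mem_ball.mp hzp⟩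
    have hballvol : ∀ p : EuclideanSpace ℝ (Fin d),
        volume (Metric.ball p δ) = ENNReal.ofReal (δ ^ d) * vB := by
      intro p
      rw [Measure.addHaar_ball volume p hδ.le, finrank_euclideanSpace_fin]
    have hδd : δ ^ d = (r/2)^d * (((lam^d)^n)⁻¹) := by
      rw [hδdef, mul_pow, inv_pow, pow_right_comm]
    calc ENNReal.ofReal ((r/2)^d / M) * vB
        ≤ (pts.card : ENNReal) * (ENNReal.ofReal (δ ^ d) * vB) := by
          rw [← mul_assoc]
          apply mul_le_mul_left
          rw [← ENNReal.ofReal_natCast pts.card, ← ENNReal.ofReal_mul (Nat.cast_nonneg _)]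
          apply ENNReal.ofReal_le_ofReal
          rw [hptscard, hδd]
          calc (r/2)^d / M = ((lam^d)^n / M) * ((r/2)^d * (((lam^d)^n)⁻¹)) := by
                field_simp
            _ ≤ G.card * ((r/2)^d * (((lam^d)^n)⁻¹)) :=
                mul_le_mul_of_nonneg_right hl1 (by positivity)
      _ = ∑ _p ∈ pts, (ENNReal.ofReal (δ ^ d) * vB) := by
          rw [Finset.sum_const, nsmul_eq_mul]
      _ = ∑ p ∈ pts, volume (Metric.ball p δ) :=
          (Finset.sum_congr rfl (fun p _ => hballvol p)).symm
      _ = volume (⋃ p ∈ pts, Metric.ball p δ) := hmeas.symm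
      _ ≤ volume (Metric.thickening δ E0) := measure_mono hsubset
  have hfin : ∃ R > 0, volume (Metric.thickening R E0) ≠ ⊤ :=
    ⟨1, one_pos, ((measure_mono (Metric.thickening_subset_cthickening _ _)).trans_lt
      ((hcp k0).cthickening.measure_lt_top)).ne⟩
  have htend := tendsto_measure_thickening_of_isClosed hfin hE0closed
  rw [show volume E0 = 0 from hnull k0] at htend
  have hpos : (0:ENNReal) < ENNReal.ofReal ((r/2)^d / M) * vB :=
    ENNReal.mul_pos (ENNReal.ofReal_pos.mpr hc0).ne' hvB0.ne'
  have hev := htend.eventually_lt_const hpos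
  rw [eventually_nhdsWithin_iff, Metric.eventually_nhds_iff] at hev
  obtain ⟨ε0, hε0, hev⟩ := hev
  obtain ⟨n1, hn1⟩ := pow_unbounded_of_one_lt (r/2/ε0) hlam
  set n := max n1 1 with hndef
  have h1n : 1 ≤ n := le_max_right _ _
  have hlamn : r/2/ε0 < lam ^ n :=
    lt_of_lt_of_le hn1 (pow_le_pow_right₀ hlam.le (le_max_left _ _))
  have hδpos : (0:ℝ) < r/2 * (lam^n)⁻¹ := by positivity
  have hδn : r/2 * (lam^n)⁻¹ < ε0 := by
    rw [div_lt_iff₀ hε0] at hlamn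
    rw [← div_eq_mul_inv, div_lt_iff₀ (pow_pos hlam0 n)]
    linarith
  have hlt := hev (show dist (r/2 * (lam^n)⁻¹) 0 < ε0 by
      rw [Real.dist_eq, sub_zero, abs_of_pos hδpos]; exact hδn)
    (mem_Ioi.mpr hδpos)
  exact absurd (hest n h1n) (not_le.mpr hlt)
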